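/- Let Ω ⊂ R^N be a measurable set with |Ω| = |B_{A,R}| for a ball B_{A,R} centered at A of radius R. Let F: [0,∞) → (0,∞) be decreasing and H: [0,∞) → (0,∞) be increasing with H strictly increasing on [0,R] and constant on [R,∞). Then ∫_Ω F(d_A(x)) dx / ∫_Ω H(d_A(x)) dx ≤ ∫_{B_{A,R}} F(d_A(x)) dx / ∫_{B_{A,R}} H(d_A(x)) dx, where d_A(x) = ‖x−A‖. (Mass displacement lemma: moving mass from outside the ball to inside increases the numerator and decreases the denominator.) -/

import Mathlib

open MeasureTheory Metric

/-- mass displacement lemma: if `|Ω| = |B(A,R)|`, `F` is positive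
decreasing and `H` is positive increasing (strictly on `[0,R]`, constant on `[R,∞)`),
then the quotient `∫_Ω F(d_A)/∫_Ω H(d_A)` is at most the corresponding quotient
over the ball `B(A,R)`. -/
theorem stmt5 {N : ℕ} (hN : 1 ≤ N) (A : EuclideanSpace ℝ (Fin N)) (R : ℝ) (hR : 0 < R)
    (Ω : Set (EuclideanSpace ℝ (Fin N))) (hΩmeas : MeasurableSet Ω)
    (hΩbdd : Bornology.IsBounded Ω)
    (hvol : volume Ω = volume (ball A R))
    (F H : ℝ → ℝ)
    (hFpos : ∀ r, 0 ≤ r → 0 < F r)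
    (hFdec : AntitoneOn F (Set.Ici 0))
    (hHpos : ∀ r, 0 ≤ r → 0 < H r)
    (hHinc : MonotoneOn H (Set.Ici 0))
    (hHstrict : StrictMonoOn H (Set.Icc 0 R))
    (hHconst : ∀ r, R ≤ r → H r = H R) :
    (∫ x in Ω, F ‖x - A‖) / (∫ x in Ω, H ‖x - A‖) ≤
      (∫ x in ball A R, F ‖x - A‖) / (∫ x in ball A R, H ‖x - A‖) := by
  classical
  set B := ball A R with hBdef
  have hBmeas : MeasurableSet B := measurableSet_ball
  set f : EuclideanSpace ℝ (Fin N) → ℝ := fun x => F ‖x - A‖ with hfdef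
  set g : EuclideanSpace ℝ (Fin N) → ℝ := fun x => H ‖x - A‖ with hgdef
  -- basic facts about the radial variable
  have hnorm : ∀ x : EuclideanSpace ℝ (Fin N), (0:ℝ) ≤ ‖x - A‖ := fun x => norm_nonneg _
  have hmemB : ∀ x, x ∈ B ↔ ‖x - A‖ < R := by
    intro x; rw [hBdef, mem_ball, dist_eq_norm]
  -- measurability
  have hcont : Continuous (fun x : EuclideanSpace ℝ (Fin N) => ‖x - A‖) :=
    (continuous_id.sub continuous_const).norm
  have hF'anti : Antitone (fun r : ℝ => F (max r 0)) := by
    intro a b hab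
    exact hFdec (Set.mem_Ici.2 (le_max_right _ _)) (Set.mem_Ici.2 (le_max_right _ _)) (max_le_max hab le_rfl)
  have hH'mono : Monotone (fun r : ℝ => H (max r 0)) := by
    intro a b hab
    exact hHinc (Set.mem_Ici.2 (le_max_right _ _)) (Set.mem_Ici.2 (le_max_right _ _)) (max_le_max hab le_rfl)
  have hfm : Measurable f := by
    have : f = fun x => (fun r : ℝ => F (max r 0)) ‖x - A‖ := by
      funext x; simp [hfdef, max_eq_left (hnorm x)]
    rw [this]; exact hF'anti.measurable.comp hcont.measurable
  have hgm : Measurable g := by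
    have : g = fun x => (fun r : ℝ => H (max r 0)) ‖x - A‖ := by
      funext x; simp [hgdef, max_eq_left (hnorm x)]
    rw [this]; exact hH'mono.measurable.comp hcont.measurable
  -- global bounds
  have hFle : ∀ r : ℝ, 0 ≤ r → F r ≤ F 0 := fun r hr =>
    hFdec Set.self_mem_Ici hr hr
  have hHle : ∀ r : ℝ, 0 ≤ r → H r ≤ H R := by
    intro r hr
    rcases le_total r R with h | h
    · exact hHinc hr hR.le h
    · exact (hHconst r h).le
  have hfbound : ∀ x, ‖f x‖ ≤ F 0 := by
    intro x
    rw [Real.norm_of_nonneg (hFpos _ (hnorm x)).le]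
    exact hFle _ (hnorm x)
  have hgbound : ∀ x, ‖g x‖ ≤ H R := by
    intro x
    rw [Real.norm_of_nonneg (hHpos _ (hnorm x)).le]
    exact hHle _ (hnorm x)
  -- finiteness of measures
  have hBfin : volume B ≠ ⊤ := measure_ball_lt_top.ne
  have hΩfin : volume Ω ≠ ⊤ := by rw [hvol]; exact hBfin
  -- integrability on any subset of Ω or B
  have hint : ∀ (s : Set (EuclideanSpace ℝ (Fin N))), volume s ≠ ⊤ →
      IntegrableOn f s volume ∧ IntegrableOn g s volume := by
    intro s hs
    constructor
    · exact Measure.integrableOn_of_bounded hs hfm.aestronglyMeasurable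
        (Filter.Eventually.of_forall fun x => hfbound x)
    · exact Measure.integrableOn_of_bounded hs hgm.aestronglyMeasurable
        (Filter.Eventually.of_forall fun x => hgbound x)
  have hfΩ : IntegrableOn f Ω volume := (hint Ω hΩfin).1
  have hgΩ : IntegrableOn g Ω volume := (hint Ω hΩfin).2
  have hfB : IntegrableOn f B volume := (hint B hBfin).1
  have hgB : IntegrableOn g B volume := (hint B hBfin).2
  -- the symmetric difference pieces have equal measure
  have hΩdfin : volume (Ω \ B) ≠ ⊤ :=
    ((measure_mono Set.diff_subset).trans_lt hΩfin.lt_top).ne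
  have hBdfin : volume (B \ Ω) ≠ ⊤ :=
    ((measure_mono Set.diff_subset).trans_lt hBfin.lt_top).ne
  have hIfin : volume (Ω ∩ B) ≠ ⊤ :=
    ((measure_mono Set.inter_subset_left).trans_lt hΩfin.lt_top).ne
  have hvolEq : volume (Ω \ B) = volume (B \ Ω) := by
    have h1 : volume (Ω \ B) + volume (Ω ∩ B) = volume Ω :=
      measure_diff_add_inter Ω hBmeas
    have h2 : volume (B \ Ω) + volume (Ω ∩ B) = volume B := by
      rw [Set.inter_comm Ω B]; exact measure_diff_add_inter B hΩmeas
    have h3 : volume (Ω \ B) + volume (Ω ∩ B) = volume (B \ Ω) + volume (Ω ∩ B) := by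
      rw [h1, h2, hvol]
    exact (ENNReal.add_left_inj hIfin).mp h3
  set c : ℝ := (volume (Ω \ B)).toReal with hcdef
  have hcB : (volume (B \ Ω)).toReal = c := by rw [hcdef, hvolEq]
  -- splitting of integrals
  have hfsplitΩ : (∫ x in Ω, f x) = (∫ x in Ω ∩ B, f x) + ∫ x in Ω \ B, f x :=
    (integral_inter_add_diff hBmeas hfΩ).symm
  have hgsplitΩ : (∫ x in Ω, g x) = (∫ x in Ω ∩ B, g x) + ∫ x in Ω \ B, g x :=
    (integral_inter_add_diff hBmeas hgΩ).symm
  have hfsplitB : (∫ x in B, f x) = (∫ x in Ω ∩ B, f x) + ∫ x in B \ Ω, f x := by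
    rw [Set.inter_comm]
    exact (integral_inter_add_diff hΩmeas hfB).symm
  have hgsplitB : (∫ x in B, g x) = (∫ x in Ω ∩ B, g x) + ∫ x in B \ Ω, g x := by
    rw [Set.inter_comm]
    exact (integral_inter_add_diff hΩmeas hgB).symm
  -- estimates on the pieces
  have hΩdmeas : MeasurableSet (Ω \ B) := hΩmeas.diff hBmeas
  have hBdmeas : MeasurableSet (B \ Ω) := hBmeas.diff hΩmeas
  have hfΩd : IntegrableOn f (Ω \ B) volume := (hint _ hΩdfin).1
  have hgΩd : IntegrableOn g (Ω \ B) volume := (hint _ hΩdfin).2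
  have hfBd : IntegrableOn f (B \ Ω) volume := (hint _ hBdfin).1
  have hgBd : IntegrableOn g (B \ Ω) volume := (hint _ hBdfin).2
  have houtR : ∀ x ∈ Ω \ B, R ≤ ‖x - A‖ := by
    intro x hx
    by_contra h
    exact hx.2 ((hmemB x).2 (lt_of_not_ge h))
  have hinR : ∀ x ∈ B \ Ω, ‖x - A‖ ≤ R := by
    intro x hx
    exact ((hmemB x).1 hx.1).le
  -- F : outside piece ≤ c * F R ≤ inside piece
  have hf1 : (∫ x in Ω \ B, f x) ≤ c * F R := by
    have : (∫ x in Ω \ B, f x) ≤ ∫ _x in Ω \ B, F R := by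
      apply setIntegral_mono_on hfΩd (integrableOn_const hΩdfin)
        hΩdmeas
      intro x hx
      exact hFdec hR.le (hnorm x) (houtR x hx)
    rw [setIntegral_const, smul_eq_mul] at this; exact this
  have hf2 : c * F R ≤ ∫ x in B \ Ω, f x := by
    have : (∫ _x in B \ Ω, F R) ≤ ∫ x in B \ Ω, f x := by
      apply setIntegral_mono_on (integrableOn_const hBdfin) hfBd
        hBdmeas
      intro x hx
      exact hFdec (hnorm x) hR.le (hinR x hx)
    rw [setIntegral_const, smul_eq_mul] at this; rw [← hcB]; exact this
  -- H : outside piece = c * H R ≥ inside piece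
  have hg1 : (∫ x in Ω \ B, g x) = c * H R := by
    have : (∫ x in Ω \ B, g x) = ∫ _x in Ω \ B, H R := by
      apply setIntegral_congr_fun hΩdmeas
      intro x hx
      exact hHconst _ (houtR x hx)
    rw [setIntegral_const, smul_eq_mul] at this; exact this
  have hg2 : (∫ x in B \ Ω, g x) ≤ c * H R := by
    have : (∫ x in B \ Ω, g x) ≤ ∫ _x in B \ Ω, H R := by
      apply setIntegral_mono_on hgBd (integrableOn_const hBdfin)
        hBdmeas
      intro x hx
      exact hHle _ (hnorm x)
    rw [setIntegral_const, smul_eq_mul] at this; rw [← hcB]; exact this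
  -- main comparisons
  have hFcomp : (∫ x in Ω, f x) ≤ ∫ x in B, f x := by
    rw [hfsplitΩ, hfsplitB]
    exact add_le_add le_rfl (hf1.trans hf2)
  have hHcomp : (∫ x in B, g x) ≤ ∫ x in Ω, g x := by
    rw [hgsplitΩ, hgsplitB, hg1]
    exact add_le_add le_rfl hg2
  -- positivity of the denominators
  have hBvolpos : 0 < (volume B).toReal :=
    ENNReal.toReal_pos (measure_ball_pos volume A hR).ne' hBfin
  have hΩvolpos : 0 < (volume Ω).toReal := by rw [hvol]; exact hBvolpos
  have hgBpos : 0 < ∫ x in B, g x := by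
    have : (∫ _x in B, H 0) ≤ ∫ x in B, g x := by
      apply setIntegral_mono_on (integrableOn_const hBfin) hgB hBmeas
      intro x _
      exact hHinc (Set.mem_Ici.2 le_rfl) (hnorm x) (hnorm x)
    have h0 : 0 < (volume B).toReal * H 0 := mul_pos hBvolpos (hHpos 0 le_rfl)
    calc (0:ℝ) < (volume B).toReal * H 0 := h0
      _ = ∫ _x in B, H 0 := by rw [setIntegral_const, smul_eq_mul]; rfl
      _ ≤ _ := this
  have hgΩpos : 0 < ∫ x in Ω, g x := lt_of_lt_of_le hgBpos hHcomp
  have hfBnn : 0 ≤ ∫ x in B, f x :=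
    setIntegral_nonneg hBmeas fun x _ => (hFpos _ (hnorm x)).le
  exact div_le_div₀ hfBnn hFcomp hgBpos hHcomp
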